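/- Let 𝐃_ET be a Sturm-Entropy-Transport distance induced by (a, F, ℓ). Suppose X = {x₁,…,xₙ} and X' = {x₁',…,xₙ'} are finite metric spaces with metrics d, d', equipped with measures μ = M∑ᵢ δ_{xᵢ} and μ' = M∑ᵢ δ_{xᵢ'}. Then 𝐃_ET^{1/a}((X,d,μ),(X',d',μ')) ≤ M·n·ℓ( sup_{i,j} |d(xᵢ,xⱼ) − d'(xᵢ',xⱼ')| ). -/

import Mathlib

open MeasureTheory ENNReal NNReal Filter Topology

/-- A (finite-valued) pseudo-metric on a set. -/
structure IsPseudoMetric {α : Type*} (d : α → α → ℝ) : Prop where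
  nonneg : ∀ x y, 0 ≤ d x y
  refl : ∀ x, d x x = 0
  symm : ∀ x y, d x y = d y x
  triangle : ∀ x y z, d x z ≤ d x y + d y z

/-- A pseudo-metric coupling between the metrics of `X₁` and `X₂` on the disjoint union. -/
structure IsMetricCoupling {X₁ X₂ : Type*} [MetricSpace X₁] [MetricSpace X₂]
    (dh : X₁ ⊕ X₂ → X₁ ⊕ X₂ → ℝ) : Prop where
  pseudo : IsPseudoMetric dh
  left : ∀ x y : X₁, dh (Sum.inl x) (Sum.inl y) = dist x y
  right : ∀ x y : X₂, dh (Sum.inr x) (Sum.inr y) = dist x y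

/-- The `F`-divergence `D_F(γ‖μ)` with recession constant `Finf` (for superlinear `F`,
`Finf = ∞`). -/
noncomputable def Fdiv {X : Type*} [MeasurableSpace X] (F : ℝ≥0∞ → ℝ≥0∞) (Finf : ℝ≥0∞)
    (γ μ : Measure X) : ℝ≥0∞ :=
  (∫⁻ x, F (γ.rnDeriv μ x) ∂μ) + Finf * (γ.singularPart μ) Set.univ

/-- The Sturm-Entropy-Transport cost (the `1/a`-power of the Sturm-Entropy-Transport
distance), in the equivalent formulation as an infimum over pseudo-metric couplings `d̂`
and plans `γ ∈ 𝓜(X₁×X₂)` of `∑ᵢ D_F(γᵢ‖μᵢ) + ∫ ℓ(d̂(x,y)) dγ`. -/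
noncomputable def SturmETCost {X₁ X₂ : Type*} [MetricSpace X₁] [MetricSpace X₂]
    [MeasurableSpace X₁] [MeasurableSpace X₂]
    (F : ℝ≥0∞ → ℝ≥0∞) (Finf : ℝ≥0∞) (ℓ : ℝ → ℝ≥0∞)
    (μ₁ : Measure X₁) (μ₂ : Measure X₂) : ℝ≥0∞ :=
  ⨅ (dh : X₁ ⊕ X₂ → X₁ ⊕ X₂ → ℝ) (_ : IsMetricCoupling dh)
    (γ : Measure (X₁ × X₂)) (_ : IsFiniteMeasure γ),
      Fdiv F Finf (γ.map Prod.fst) μ₁ + Fdiv F Finf (γ.map Prod.snd) μ₂ +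
        ∫⁻ q, ℓ (dh (Sum.inl q.1) (Sum.inr q.2)) ∂γ


section Aux

/-- Build a metric coupling from a "cross-distance" function `h`. -/
lemma isMetricCoupling_ofFun {X₁ X₂ : Type*} [MetricSpace X₁] [MetricSpace X₂]
    (h : X₁ → X₂ → ℝ)
    (h0 : ∀ a b, 0 ≤ h a b)
    (hT1 : ∀ a a' b, h a b ≤ dist a a' + h a' b)
    (hT2 : ∀ a b b', h a b ≤ h a b' + dist b' b)
    (hT3 : ∀ a a' b, dist a a' ≤ h a b + h a' b)
    (hT4 : ∀ a b b', dist b b' ≤ h a b + h a b') :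
    IsMetricCoupling (fun u v : X₁ ⊕ X₂ => match u, v with
      | Sum.inl a, Sum.inl b => dist a b
      | Sum.inl a, Sum.inr b => h a b
      | Sum.inr a, Sum.inl b => h b a
      | Sum.inr a, Sum.inr b => dist a b) := by
  refine ⟨⟨?_, ?_, ?_, ?_⟩, fun _ _ => rfl, fun _ _ => rfl⟩
  · rintro (a | a) (b | b) <;> simp [dist_nonneg, h0]
  · rintro (a | a) <;> simp
  · rintro (a | a) (b | b) <;> simp [dist_comm]
  · rintro (a | a) (b | b) (c | c) <;> simp only []
    · exact dist_triangle a b c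
    · exact hT1 a b c
    · exact hT3 a c b
    · exact hT2 a c b
    · calc h c a ≤ dist c b + h b a := hT1 c b a
        _ = h b a + dist b c := by rw [dist_comm, add_comm]
    · exact hT4 b a c
    · calc h c a ≤ h c b + dist b a := hT2 c a b
        _ = dist a b + h c b := by rw [dist_comm, add_comm]
    · exact dist_triangle a b c

lemma Fdiv_self_top {Y : Type*} [MeasurableSpace Y] (F : ℝ≥0∞ → ℝ≥0∞) (hF1 : F 1 = 0)
    (μ : Measure Y) [SigmaFinite μ] : Fdiv F ⊤ μ μ = 0 := by
  unfold Fdiv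
  rw [Measure.singularPart_self]
  have : (∫⁻ y, F (μ.rnDeriv μ y) ∂μ) = ∫⁻ _, (0 : ℝ≥0∞) ∂μ := by
    refine lintegral_congr_ae ?_
    filter_upwards [Measure.rnDeriv_self μ] with y hy
    rw [hy, hF1]
  rw [this]
  simp

lemma Measure.map_finsetSum {α β ι : Type*} [MeasurableSpace α] [MeasurableSpace β]
    (s : Finset ι) (μ : ι → Measure α) {f : α → β} (hf : Measurable f) :
    ((∑ i ∈ s, μ i).map f) = ∑ i ∈ s, (μ i).map f := by
  classical
  induction s using Finset.induction with
  | empty => simp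
  | insert _ _ hns ih =>
      rw [Finset.sum_insert hns, Measure.map_add _ _ hf, ih, Finset.sum_insert hns]

lemma isFiniteMeasure_smul_sum_dirac {Y : Type*} [MeasurableSpace Y] {n : ℕ}
    (y : Fin n → Y) (M : ℝ≥0) :
    IsFiniteMeasure ((M : ℝ≥0∞) • ∑ i : Fin n, Measure.dirac (y i)) := by
  constructor
  rw [Measure.smul_apply, Measure.finset_sum_apply]
  simp only [measure_univ, Finset.sum_const, Finset.card_univ, Fintype.card_fin,
    smul_eq_mul, nsmul_eq_mul, mul_one]
  exact ENNReal.mul_lt_top ENNReal.coe_lt_top (by simp)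

end Aux

/-- For finite metric spaces `X = {x₁,…,xₙ}`, `X' = {x₁',…,xₙ'}` with
measures `μ = M ∑ᵢ δ_{xᵢ}`, `μ' = M ∑ᵢ δ_{xᵢ'}`, the Sturm-Entropy-Transport cost satisfies
`𝐃_ET^{1/a}((X,d,μ),(X',d',μ')) ≤ M·n·ℓ(sup_{i,j} |d(xᵢ,xⱼ) − d'(xᵢ',xⱼ')|)`. -/
theorem sturmET_dirac_bound
    {X X' : Type*} [MetricSpace X] [MetricSpace X']
    [MeasurableSpace X] [BorelSpace X] [MeasurableSpace X'] [BorelSpace X']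
    (F : ℝ≥0∞ → ℝ≥0∞)
    (hFconv : ∀ x y t : ℝ≥0∞, t ≤ 1 → F (t * x + (1 - t) * y) ≤ t * F x + (1 - t) * F y)
    (hFlsc : LowerSemicontinuous F)
    (hF1 : F 1 = 0)
    (ℓ : ℝ → ℝ≥0∞)
    (hℓcont : Continuous ℓ)
    (hℓmono : Monotone ℓ)
    (hℓ0 : ∀ s : ℝ, 0 ≤ s → (ℓ s = 0 ↔ s = 0))
    (n : ℕ) (x : Fin n → X) (x' : Fin n → X') (M : ℝ≥0) :
    SturmETCost F ⊤ ℓ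
        ((M : ℝ≥0∞) • ∑ i : Fin n, Measure.dirac (x i))
        ((M : ℝ≥0∞) • ∑ i : Fin n, Measure.dirac (x' i)) ≤
      (M : ℝ≥0∞) * n * ℓ (⨆ i : Fin n, ⨆ j : Fin n,
        |dist (x i) (x j) - dist (x' i) (x' j)|) := by
  classical
  set δ : ℝ := ⨆ i : Fin n, ⨆ j : Fin n, |dist (x i) (x j) - dist (x' i) (x' j)| with hδdef
  rcases Nat.eq_zero_or_pos n with hn | hn
  · -- degenerate case `n = 0`: the measures are zero and the cost is zero
    subst hn
    have hex : ∃ h : X → X' → ℝ, (∀ a b, 0 ≤ h a b) ∧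
        (∀ a a' b, h a b ≤ dist a a' + h a' b) ∧
        (∀ a b b', h a b ≤ h a b' + dist b' b) ∧
        (∀ a a' b, dist a a' ≤ h a b + h a' b) ∧
        (∀ a b b', dist b b' ≤ h a b + h a b') := by
      rcases isEmpty_or_nonempty X with hX | hX
      · exact ⟨fun a _ => (IsEmpty.false a).elim, fun a => (IsEmpty.false a).elim,
          fun a => (IsEmpty.false a).elim, fun a => (IsEmpty.false a).elim,
          fun a => (IsEmpty.false a).elim, fun a => (IsEmpty.false a).elim⟩
      rcases isEmpty_or_nonempty X' with hX' | hX'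
      · exact ⟨fun _ b => (IsEmpty.false b).elim, fun _ b => (IsEmpty.false b).elim,
          fun _ _ b => (IsEmpty.false b).elim, fun _ b => (IsEmpty.false b).elim,
          fun _ _ b => (IsEmpty.false b).elim, fun _ b => (IsEmpty.false b).elim⟩
      · refine ⟨fun a b => dist a (Classical.arbitrary X) + dist b (Classical.arbitrary X'),
          fun a b => by positivity, fun a a' b => ?_, fun a b b' => ?_, fun a a' b => ?_,
          fun a b b' => ?_⟩
        · dsimp only; have := dist_triangle a a' (Classical.arbitrary X); linarith
        · dsimp only; have := dist_triangle b b' (Classical.arbitrary X')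
          have := dist_comm b b'; linarith
        · dsimp only; have := dist_triangle a (Classical.arbitrary X) a'
          have := dist_comm a' (Classical.arbitrary X)
          have := dist_nonneg (x := b) (y := Classical.arbitrary X'); linarith
        · dsimp only; have := dist_triangle b (Classical.arbitrary X') b'
          have := dist_comm b' (Classical.arbitrary X')
          have := dist_nonneg (x := a) (y := Classical.arbitrary X); linarith
    obtain ⟨h, h0, hT1, hT2, hT3, hT4⟩ := hex
    refine le_trans ?_ zero_le
    rw [SturmETCost]
    refine iInf_le_of_le _ (iInf_le_of_le (isMetricCoupling_ofFun h h0 hT1 hT2 hT3 hT4)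
      (iInf_le_of_le 0 (iInf_le_of_le inferInstance ?_)))
    have hz : ((M : ℝ≥0∞) • ∑ i : Fin 0, Measure.dirac (x i)) = 0 := by simp
    have hz' : ((M : ℝ≥0∞) • ∑ i : Fin 0, Measure.dirac (x' i)) = 0 := by simp
    rw [hz, hz']
    simp [Fdiv_self_top F hF1 (0 : Measure X), Fdiv_self_top F hF1 (0 : Measure X'),
      Measure.map_zero]
  · -- main case `n ≥ 1`
    haveI : Nonempty (Fin n) := ⟨⟨0, hn⟩⟩
    have hδ : ∀ i j : Fin n, |dist (x i) (x j) - dist (x' i) (x' j)| ≤ δ := by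
      intro i j
      have h1 : |dist (x i) (x j) - dist (x' i) (x' j)| ≤
          ⨆ j : Fin n, |dist (x i) (x j) - dist (x' i) (x' j)| :=
        le_ciSup (f := fun j => |dist (x i) (x j) - dist (x' i) (x' j)|)
          (Finite.bddAbove_range _) j
      have h2 : (⨆ j : Fin n, |dist (x i) (x j) - dist (x' i) (x' j)|) ≤ δ :=
        le_ciSup (f := fun i => ⨆ j : Fin n, |dist (x i) (x j) - dist (x' i) (x' j)|)
          (Finite.bddAbove_range _) i
      exact h1.trans h2
    have hδ0 : 0 ≤ δ := le_trans (abs_nonneg _) (hδ ⟨0, hn⟩ ⟨0, hn⟩)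
    have hne : (Finset.univ : Finset (Fin n)).Nonempty := Finset.univ_nonempty
    set h : X → X' → ℝ :=
      fun a b => Finset.univ.inf' hne (fun i => dist a (x i) + δ + dist b (x' i)) with hh
    have h0 : ∀ a b, 0 ≤ h a b := by
      intro a b
      exact Finset.le_inf' hne _ fun i _ =>
        add_nonneg (add_nonneg dist_nonneg hδ0) dist_nonneg
    have hT1 : ∀ a a' b, h a b ≤ dist a a' + h a' b := by
      intro a a' b
      obtain ⟨i, -, hi⟩ :=
        Finset.exists_mem_eq_inf' hne (fun i => dist a' (x i) + δ + dist b (x' i))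
      have h1 : h a b ≤ dist a (x i) + δ + dist b (x' i) :=
        Finset.inf'_le _ (Finset.mem_univ i)
      have h2 : dist a (x i) ≤ dist a a' + dist a' (x i) := dist_triangle a a' (x i)
      have hival : h a' b = dist a' (x i) + δ + dist b (x' i) := hi
      linarith
    have hT2 : ∀ a b b', h a b ≤ h a b' + dist b' b := by
      intro a b b'
      obtain ⟨i, -, hi⟩ :=
        Finset.exists_mem_eq_inf' hne (fun i => dist a (x i) + δ + dist b' (x' i))
      have h1 : h a b ≤ dist a (x i) + δ + dist b (x' i) :=
        Finset.inf'_le _ (Finset.mem_univ i)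
      have h2 : dist b (x' i) ≤ dist b b' + dist b' (x' i) := dist_triangle b b' (x' i)
      have h3 : dist b b' = dist b' b := dist_comm b b'
      have hival : h a b' = dist a (x i) + δ + dist b' (x' i) := hi
      linarith
    have hT3 : ∀ a a' b, dist a a' ≤ h a b + h a' b := by
      intro a a' b
      obtain ⟨i, -, hi⟩ :=
        Finset.exists_mem_eq_inf' hne (fun i => dist a (x i) + δ + dist b (x' i))
      obtain ⟨j, -, hj⟩ :=
        Finset.exists_mem_eq_inf' hne (fun j => dist a' (x j) + δ + dist b (x' j))
      have h1 : dist a a' ≤ dist a (x i) + dist (x i) (x j) + dist (x j) a' :=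
        dist_triangle4 a (x i) (x j) a'
      have h2 : dist (x i) (x j) - dist (x' i) (x' j) ≤ δ := (abs_le.mp (hδ i j)).2
      have h3 : dist (x' i) (x' j) ≤ dist (x' i) b + dist b (x' j) :=
        dist_triangle (x' i) b (x' j)
      have h4 : dist (x j) a' = dist a' (x j) := dist_comm _ _
      have h5 : dist (x' i) b = dist b (x' i) := dist_comm _ _
      have hival : h a b = dist a (x i) + δ + dist b (x' i) := hi
      have hjval : h a' b = dist a' (x j) + δ + dist b (x' j) := hj
      linarith
    have hT4 : ∀ a b b', dist b b' ≤ h a b + h a b' := by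
      intro a b b'
      obtain ⟨i, -, hi⟩ :=
        Finset.exists_mem_eq_inf' hne (fun i => dist a (x i) + δ + dist b (x' i))
      obtain ⟨j, -, hj⟩ :=
        Finset.exists_mem_eq_inf' hne (fun j => dist a (x j) + δ + dist b' (x' j))
      have h1 : dist b b' ≤ dist b (x' i) + dist (x' i) (x' j) + dist (x' j) b' :=
        dist_triangle4 b (x' i) (x' j) b'
      have h2 : -δ ≤ dist (x i) (x j) - dist (x' i) (x' j) := (abs_le.mp (hδ i j)).1
      have h3 : dist (x i) (x j) ≤ dist (x i) a + dist a (x j) := dist_triangle (x i) a (x j)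
      have h4 : dist (x' j) b' = dist b' (x' j) := dist_comm _ _
      have h5 : dist (x i) a = dist a (x i) := dist_comm _ _
      have hival : h a b = dist a (x i) + δ + dist b (x' i) := hi
      have hjval : h a b' = dist a (x j) + δ + dist b' (x' j) := hj
      linarith
    have hcoup := isMetricCoupling_ofFun h h0 hT1 hT2 hT3 hT4
    set γ : Measure (X × X') := (M : ℝ≥0∞) • ∑ i : Fin n, Measure.dirac ((x i, x' i)) with hγ
    haveI hγfin : IsFiniteMeasure γ := by
      rw [hγ]; exact isFiniteMeasure_smul_sum_dirac (fun i => (x i, x' i)) M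
    haveI hμ1 : IsFiniteMeasure ((M : ℝ≥0∞) • ∑ i : Fin n, Measure.dirac (x i)) :=
      isFiniteMeasure_smul_sum_dirac x M
    haveI hμ2 : IsFiniteMeasure ((M : ℝ≥0∞) • ∑ i : Fin n, Measure.dirac (x' i)) :=
      isFiniteMeasure_smul_sum_dirac x' M
    rw [SturmETCost]
    refine iInf_le_of_le _ (iInf_le_of_le hcoup (iInf_le_of_le γ (iInf_le_of_le hγfin ?_)))
    have hmap1 : γ.map Prod.fst = (M : ℝ≥0∞) • ∑ i : Fin n, Measure.dirac (x i) := by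
      rw [hγ, Measure.map_smul, Measure.map_finsetSum _ _ measurable_fst]
      simp [Measure.map_dirac' measurable_fst]
    have hmap2 : γ.map Prod.snd = (M : ℝ≥0∞) • ∑ i : Fin n, Measure.dirac (x' i) := by
      rw [hγ, Measure.map_smul, Measure.map_finsetSum _ _ measurable_snd]
      simp [Measure.map_dirac' measurable_snd]
    have hlint : (∫⁻ q, ℓ ((fun u v : X ⊕ X' => match u, v with
          | Sum.inl a, Sum.inl b => dist a b
          | Sum.inl a, Sum.inr b => h a b
          | Sum.inr a, Sum.inl b => h b a
          | Sum.inr a, Sum.inr b => dist a b) (Sum.inl q.1) (Sum.inr q.2)) ∂γ)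
        = (M : ℝ≥0∞) * ∑ i : Fin n, ℓ (h (x i) (x' i)) := by
      rw [hγ, lintegral_smul_measure, lintegral_finset_sum_measure]
      congr 1
      exact Finset.sum_congr rfl fun i _ => lintegral_dirac _ _
    have hhδ : ∀ i : Fin n, h (x i) (x' i) ≤ δ := by
      intro i
      have := Finset.inf'_le (b := i)
        (fun j => dist (x i) (x j) + δ + dist (x' i) (x' j)) (Finset.mem_univ i)
      exact this.trans_eq (by simp)
    calc Fdiv F ⊤ (γ.map Prod.fst) ((M : ℝ≥0∞) • ∑ i : Fin n, Measure.dirac (x i)) +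
          Fdiv F ⊤ (γ.map Prod.snd) ((M : ℝ≥0∞) • ∑ i : Fin n, Measure.dirac (x' i)) +
          ∫⁻ q, ℓ ((fun u v : X ⊕ X' => match u, v with
            | Sum.inl a, Sum.inl b => dist a b
            | Sum.inl a, Sum.inr b => h a b
            | Sum.inr a, Sum.inl b => h b a
            | Sum.inr a, Sum.inr b => dist a b) (Sum.inl q.1) (Sum.inr q.2)) ∂γ
        = (M : ℝ≥0∞) * ∑ i : Fin n, ℓ (h (x i) (x' i)) := by
          rw [hmap1, hmap2, Fdiv_self_top F hF1, Fdiv_self_top F hF1, hlint]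
          simp
      _ ≤ (M : ℝ≥0∞) * ∑ _i : Fin n, ℓ δ := by
          refine mul_le_mul_right (Finset.sum_le_sum fun i _ => ?_) _
          exact hℓmono (hhδ i)
      _ = (M : ℝ≥0∞) * n * ℓ δ := by
          rw [Finset.sum_const, Finset.card_univ, Fintype.card_fin, mul_assoc]
          simp [nsmul_eq_mul]
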